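/- Let u and v be nonempty strings. If the length of the longest common prefix of the infinite periodic strings u^ω and v^ω is at least |u| + |v| - gcd(|u|,|v|), then u^ω = v^ω; equivalently, both u and v are powers of a common string of length gcd(|u|,|v|). -/

import Mathlib

/-- `k`-fold concatenation of the string `x` with itself. -/
def listPow {α : Type*} (x : List α) (k : ℕ) : List α := (List.replicate k x).flatten

/-- The omega extension `u^ω = u·u·u···` of a nonempty string `u`,
as an infinite string (function on positions, 0-indexed). -/
def omegaExt {α : Type*} [Inhabited α] (u : List α) (i : ℕ) : α :=
  u.getD (i % u.length) default

private lemma per_mod {α : Type*} {F : ℕ → α} {p : ℕ} (hp : 0 < p)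
    (h : ∀ i, F (i + p) = F i) : ∀ i, F i = F (i % p) := by
  intro i
  induction i using Nat.strong_induction_on with
  | _ i ih =>
    by_cases hi : i < p
    · rw [Nat.mod_eq_of_lt hi]
    · push_neg at hi
      have h1 : i - p + p = i := Nat.sub_add_cancel hi
      have h2 : i % p = (i - p) % p := (Nat.mod_eq_sub_mod hi)
      calc F i = F (i - p + p) := by rw [h1]
        _ = F (i - p) := h (i - p)
        _ = F ((i - p) % p) := ih (i - p) (by omega)
        _ = F (i % p) := by rw [← h2]

private lemma per_iter {α : Type*} {F : ℕ → α} {p : ℕ}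
    (h : ∀ i, F (i + p) = F i) : ∀ b i, F (i + b * p) = F i := by
  intro b
  induction b with
  | zero => simp
  | succ b ih =>
    intro i
    have e : i + (b + 1) * p = i + b * p + p := by ring
    rw [e, h, ih]

private lemma bez (m n : ℕ) (hm : 0 < m) (hn : 0 < n) :
    ∃ a b : ℕ, a * m = b * n + Nat.gcd m n := by
  rcases lt_or_eq_of_le (Nat.le_of_dvd hn (Nat.gcd_dvd_right m n)) with hlt | heq
  · obtain ⟨a, -, ha⟩ := Nat.exists_mul_mod_eq_gcd hlt
    refine ⟨a, m * a / n, ?_⟩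
    rw [mul_comm a m, ← ha]
    exact (Nat.div_add_mod' (m * a) n).symm
  · -- gcd m n = n, so n ∣ m
    have hdvd : n ∣ m := heq ▸ Nat.gcd_dvd_left m n
    obtain ⟨c, hc⟩ := hdvd
    have hc1 : 0 < c := by
      rcases Nat.eq_zero_or_pos c with h0 | h1
      · subst h0; simp at hc; omega
      · exact h1
    obtain ⟨d, rfl⟩ : ∃ d, c = d + 1 := ⟨c - 1, by omega⟩
    refine ⟨1, d, ?_⟩
    rw [heq, one_mul, hc]
    ring

private lemma fwAux {α : Type*} : ∀ (s m n : ℕ) (F G : ℕ → α), m + n ≤ s → 0 < m → 0 < n → n ≤ m →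
    (∀ i, F (i + m) = F i) → (∀ i, G (i + n) = G i) →
    (∀ i < m + n - Nat.gcd m n, F i = G i) → ∀ i, F i = G i := by
  intro s
  induction s with
  | zero => intro m n F G hs hm hn; omega
  | succ s ih =>
    intro m n F G hs hm hn hnm hF hG h i
    have hgn : Nat.gcd m n ≤ n := Nat.le_of_dvd hn (Nat.gcd_dvd_right m n)
    rcases eq_or_lt_of_le hnm with heq | hlt
    · -- m = n
      subst heq
      have hg : Nat.gcd n n = n := Nat.gcd_self n
      have h1 : F i = F (i % n) := per_mod hn hF i
      have h2 : G i = G (i % n) := per_mod hn hG i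
      rw [h1, h2]
      exact h (i % n) (by have := Nat.mod_lt i hn; omega)
    · -- n < m
      set m' := m - n with hm'
      have hm'pos : 0 < m' := by omega
      set g := Nat.gcd m n with hg
      have hgg : Nat.gcd m' n = g := by
        rw [hm', hg, Nat.gcd_sub_self_left hnm]
      -- Step 1: F j = F (j + m') for j < n - g
      have step1 : ∀ j < n - g, F j = F (j + m') := by
        intro j hj
        have e1 : F (j + m') = G (j + m') := h (j + m') (by omega)
        have e2 : G (j + m') = G (j + m' + n) := (hG (j + m')).symm
        have e3 : j + m' + n = j + m := by omega
        have e4 : G (j + m) = F (j + m) := (h (j + m) (by omega)).symm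
        have e5 : F (j + m) = F j := hF j
        rw [e1, e2, e3, e4, e5]
      -- Step 2: F j = F (j % m') for j < m - g
      have step2 : ∀ j < m - g, F j = F (j % m') := by
        intro j
        induction j using Nat.strong_induction_on with
        | _ j ihj =>
          intro hj
          by_cases hjm : j < m'
          · rw [Nat.mod_eq_of_lt hjm]
          · push_neg at hjm
            have e0 : j - m' + m' = j := Nat.sub_add_cancel hjm
            have e1 : F (j - m') = F (j - m' + m') := step1 (j - m') (by omega)
            have e2 : F (j - m') = F ((j - m') % m') := ihj (j - m') (by omega) (by omega)
            have e3 : j % m' = (j - m') % m' := Nat.mod_eq_sub_mod hjm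
            calc F j = F (j - m' + m') := by rw [e0]
              _ = F (j - m') := e1.symm
              _ = F ((j - m') % m') := e2
              _ = F (j % m') := by rw [← e3]
      -- H
      set H : ℕ → α := fun j => F (j % m') with hH
      have hHper : ∀ j, H (j + m') = H j := by
        intro j; simp only [hH, Nat.add_mod_right]
      have hHG : ∀ j < m' + n - Nat.gcd m' n, H j = G j := by
        intro j hj
        rw [hgg] at hj
        have hj' : j < m - g := by omega
        have : H j = F j := (step2 j hj').symm
        rw [this]
        exact h j (by omega)
      have hHGall : ∀ j, H j = G j := by
        rcases le_or_gt n m' with hc | hc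
        · exact ih m' n H G (by omega) hm'pos hn hc hHper hG hHG
        · intro j
          have := ih n m' G H (by omega) hn hm'pos (le_of_lt hc) hG hHper
            (by intro j hj; rw [Nat.gcd_comm] at hj; exact (hHG j (by omega)).symm) j
          exact this.symm
      -- G has period m' and n hence period m
      have hGm' : ∀ j, G (j + m') = G j := by
        intro j; rw [← hHGall, ← hHGall, hHper]
      have hGm : ∀ j, G (j + m) = G j := by
        intro j
        have : j + m = j + m' + n := by omega
        rw [this, hG, hGm']
      have h1 : F i = F (i % m) := per_mod hm hF i
      have h2 : G i = G (i % m) := per_mod hm hGm i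
      rw [h1, h2]
      exact h (i % m) (by have := Nat.mod_lt i hm; omega)

private lemma fw {α : Type*} (m n : ℕ) (F G : ℕ → α) (hm : 0 < m) (hn : 0 < n)
    (hF : ∀ i, F (i + m) = F i) (hG : ∀ i, G (i + n) = G i)
    (h : ∀ i < m + n - Nat.gcd m n, F i = G i) : ∀ i, F i = G i := by
  rcases le_or_gt n m with hc | hc
  · exact fwAux (m + n) m n F G le_rfl hm hn hc hF hG h
  · intro i
    exact (fwAux (m + n) n m G F (by omega) hn hm (le_of_lt hc) hG hF
      (by intro j hj; rw [Nat.gcd_comm] at hj; exact (h j (by omega)).symm) i).symm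

private lemma listPow_succ {α : Type*} (x : List α) (k : ℕ) :
    listPow x (k + 1) = x ++ listPow x k := by
  simp [listPow, List.replicate_succ]

private lemma listPow_length {α : Type*} (x : List α) (k : ℕ) :
    (listPow x k).length = k * x.length := by
  induction k with
  | zero => simp [listPow]
  | succ k ih => rw [listPow_succ]; simp [ih]; ring

private lemma listPow_getD {α : Type*} [Inhabited α] (x : List α) (hx : x ≠ []) (k i : ℕ)
    (hi : i < k * x.length) :
    (listPow x k).getD i default = x.getD (i % x.length) default := by
  induction k generalizing i with
  | zero => omega
  | succ k ih =>
    rw [listPow_succ]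
    by_cases hix : i < x.length
    · rw [Nat.mod_eq_of_lt hix]
      rw [List.getD_eq_getElem?_getD, List.getElem?_append_left hix,
        ← List.getD_eq_getElem?_getD]
    · push_neg at hix
      have hl : (k + 1) * x.length = k * x.length + x.length := by ring
      have e : i % x.length = (i - x.length) % x.length := Nat.mod_eq_sub_mod hix
      rw [e, ← ih (i - x.length) (by omega)]
      rw [List.getD_eq_getElem?_getD, List.getElem?_append_right hix,
        ← List.getD_eq_getElem?_getD]

theorem omega_fine_wilf {α : Type*} [Inhabited α] (u v : List α)
    (hu : u ≠ []) (hv : v ≠ [])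
    (h : ∀ i < u.length + v.length - Nat.gcd u.length v.length,
      omegaExt u i = omegaExt v i) :
    (∀ i, omegaExt u i = omegaExt v i) ∧
    ∃ x : List α, x.length = Nat.gcd u.length v.length ∧
      (∃ k, u = listPow x k) ∧ (∃ m, v = listPow x m) := by
  set m := u.length with hmdef
  set n := v.length with hndef
  have hm : 0 < m := List.length_pos_iff.mpr hu
  have hn : 0 < n := List.length_pos_iff.mpr hv
  set g := Nat.gcd m n with hgdef
  have hgm : g ∣ m := Nat.gcd_dvd_left m n
  have hgn : g ∣ n := Nat.gcd_dvd_right m n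
  have hgpos : 0 < g := Nat.gcd_pos_of_pos_left n hm
  set F : ℕ → α := omegaExt u with hF
  set G : ℕ → α := omegaExt v with hG
  have hFper : ∀ i, F (i + m) = F i := by
    intro i; simp only [hF, omegaExt, ← hmdef, Nat.add_mod_right]
  have hGper : ∀ i, G (i + n) = G i := by
    intro i; simp only [hG, omegaExt, ← hndef, Nat.add_mod_right]
  have main : ∀ i, F i = G i := fw m n F G hm hn hFper hGper h
  refine ⟨main, ?_⟩
  -- F has period n too
  have hFn : ∀ i, F (i + n) = F i := by
    intro i; rw [main, main, hGper]
  -- F has period g via Bezout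
  obtain ⟨a, b, hab⟩ := bez m n hm hn
  have hFg : ∀ i, F (i + g) = F i := by
    intro i
    have e1 : F (i + g + b * n) = F (i + g) := per_iter hFn b (i + g)
    have e2 : i + g + b * n = i + a * m := by omega
    have e3 : F (i + a * m) = F i := per_iter hFper a i
    rw [← e1, e2, e3]
  have hFmod : ∀ i, F i = F (i % g) := per_mod hgpos hFg
  -- getD facts
  have hFval : ∀ i < m, F i = u.getD i default := by
    intro i hi; simp only [hF, omegaExt, ← hmdef, Nat.mod_eq_of_lt hi]
  have hGval : ∀ i < n, G i = v.getD i default := by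
    intro i hi; simp only [hG, omegaExt, ← hndef, Nat.mod_eq_of_lt hi]
  set x : List α := u.take g with hx
  have hxlen : x.length = g := by
    rw [hx, List.length_take]
    exact min_eq_left (Nat.le_of_dvd hm hgm)
  have hxval : ∀ i < g, x.getD i default = F i := by
    intro i hi
    rw [hx, List.getD_eq_getElem?_getD, List.getElem?_take_of_lt (by omega),
      ← List.getD_eq_getElem?_getD]
    exact (hFval i (by have := Nat.le_of_dvd hm hgm; omega)).symm
  refine ⟨x, hxlen, ⟨m / g, ?_⟩, ⟨n / g, ?_⟩⟩
  · apply List.ext_getElem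
    · rw [listPow_length, hxlen, Nat.div_mul_cancel hgm]
    · intro i h1 h2
      have him : i < m := by rwa [← hmdef] at h1
      have e1 : u[i] = u.getD i default := (List.getD_eq_getElem u default h1).symm
      rw [show ((listPow x (m/g))[i] = (listPow x (m/g)).getD i default) from
        (List.getD_eq_getElem _ default h2).symm]
      rw [listPow_getD x (by intro hc; rw [hc] at hxlen; simp at hxlen; omega) _ i
        (by rw [hxlen, Nat.div_mul_cancel hgm]; exact him)]
      rw [hxlen, e1, ← hFval i him, hxval (i % g) (Nat.mod_lt i hgpos), ← hFmod]
  · apply List.ext_getElem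
    · rw [listPow_length, hxlen, Nat.div_mul_cancel hgn]
    · intro i h1 h2
      have hin : i < n := by rwa [← hndef] at h1
      have e1 : v[i] = v.getD i default := (List.getD_eq_getElem v default h1).symm
      rw [show ((listPow x (n/g))[i] = (listPow x (n/g)).getD i default) from
        (List.getD_eq_getElem _ default h2).symm]
      rw [listPow_getD x (by intro hc; rw [hc] at hxlen; simp at hxlen; omega) _ i
        (by rw [hxlen, Nat.div_mul_cancel hgn]; exact hin)]
      rw [hxlen, e1, ← hGval i hin, hxval (i % g) (Nat.mod_lt i hgpos), ← hFmod,
        main]
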